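/- Let (X, I) be a matroid, let B₁, B₂, …, B_k be a partition of X, let fᵢ : 2^{Bᵢ} → ℝ≥0 be monotone submodular for each i, and let f(S) = Σ_{i=1}^k fᵢ(S ∩ Bᵢ). Suppose the optimal solution S* of max{ f(S) : S ∈ I } is unique and is 2-stable with respect to individual perturbations of the fᵢ: for every choice of 2-perturbations f̃ᵢ of fᵢ (one for each i), S* is the unique maximizer of Σᵢ f̃ᵢ(S ∩ Bᵢ) over I. Then every greedy run (repeatedly adding a feasible element of maximum marginal value of f until the set is maximal) outputs S*. -/

import Mathlib

open Finset

/-- A downward-closed independence system on the finite type `α`. -/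
def DownClosed {α : Type*} (I : Finset α → Prop) : Prop :=
  I ∅ ∧ ∀ A B : Finset α, I A → B ⊆ A → I B
/-- `I` is (the family of independent sets of) a matroid: downward closed, contains `∅`,
and satisfies the exchange axiom. -/
def IsMatroidFam {α : Type*} [DecidableEq α] (I : Finset α → Prop) : Prop :=
  I ∅ ∧ (∀ A B : Finset α, I A → B ⊆ A → I B) ∧
  ∀ A B : Finset α, I A → I B → A.card < B.card →
    ∃ e ∈ B, e ∉ A ∧ I (insert e A)
/-- A greedy run for a set function `f`: every prefix is independent, each `eᵢ`
maximizes the marginal value among feasible additions, and the final set is maximal. -/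
def GreedyRunSub {α : Type*} [DecidableEq α] (I : Finset α → Prop)
    (f : Finset α → ℝ) (l : List α) : Prop :=
  (∀ i : Fin l.length,
    l.get i ∉ (l.take i.val).toFinset ∧
    I (insert (l.get i) (l.take i.val).toFinset) ∧
    ∀ e : α, e ∉ (l.take i.val).toFinset → I (insert e (l.take i.val).toFinset) →
      f (insert e (l.take i.val).toFinset) - f (l.take i.val).toFinset ≤
        f (insert (l.get i) (l.take i.val).toFinset) - f (l.take i.val).toFinset) ∧
  ∀ e : α, e ∉ l.toFinset → ¬ I (insert e l.toFinset)

/-- `f'` is a `γ`-perturbation of `f` as functions on subsets of the block `B`: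
nonnegative, monotone and submodular on `2^B`, pointwise within `[f, γ·f]`, and with
marginal values increased by at most `(γ−1)·f({j})`. -/
def PerturbationOn {α : Type*} [DecidableEq α] (B : Finset α) (γ : ℝ)
    (f f' : Finset α → ℝ) : Prop :=
  (∀ S : Finset α, S ⊆ B → 0 ≤ f' S) ∧
  (∀ S T : Finset α, S ⊆ T → T ⊆ B → f' S ≤ f' T) ∧
  (∀ S T : Finset α, S ⊆ B → T ⊆ B → f' (S ∪ T) + f' (S ∩ T) ≤ f' S + f' T) ∧
  (∀ S : Finset α, S ⊆ B → f S ≤ f' S ∧ f' S ≤ γ * f S) ∧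
  ∀ S : Finset α, S ⊆ B → ∀ j ∈ B, j ∉ S →
    f (insert j S) - f S ≤ f' (insert j S) - f' S ∧
    (f' (insert j S) - f' S) - (f (insert j S) - f S) ≤ (γ - 1) * f {j}

/-- Welfare maximization over a matroid: if `f = Σᵢ fᵢ` for monotone
submodular `fᵢ` on the blocks `Bᵢ` of a partition of the ground set, and the optimal
solution `S*` is `2`-stable with respect to individual `2`-perturbations of the `fᵢ`,
then every greedy run for `f` outputs `S*`. -/

private lemma matroid_aug {α : Type*} [DecidableEq α] {I : Finset α → Prop}
    (hmat : IsMatroidFam I) :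
    ∀ (n : ℕ) (C D : Finset α), I C → I D → C.card ≤ D.card → D.card - C.card = n →
      ∃ C', I C' ∧ C ⊆ C' ∧ C' ⊆ C ∪ D ∧ C'.card = D.card := by
  intro n
  induction n with
  | zero =>
    intro C D hC _ hle h0
    exact ⟨C, hC, Finset.Subset.refl C, Finset.subset_union_left, by omega⟩
  | succ n ih =>
    intro C D hC hD hle hn
    have hlt : C.card < D.card := by omega
    obtain ⟨x, hxD, hxC, hxI⟩ := hmat.2.2 C D hC hD hlt
    have hcard : (insert x C).card = C.card + 1 := Finset.card_insert_of_notMem hxC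
    obtain ⟨C', h1, h2, h3, h4⟩ := ih (insert x C) D hxI hD (by omega) (by omega)
    refine ⟨C', h1, (Finset.subset_insert x C).trans h2, h3.trans ?_, h4⟩
    intro y hy
    rcases Finset.mem_union.mp hy with h | h
    · rcases Finset.mem_insert.mp h with h | h
      · exact Finset.mem_union_right _ (h ▸ hxD)
      · exact Finset.mem_union_left _ h
    · exact Finset.mem_union_right _ h

private lemma pert_on {α : Type*} [DecidableEq α] (B : Finset α) (f : Finset α → ℝ)
    (hf0 : ∀ S : Finset α, S ⊆ B → 0 ≤ f S)
    (hm : ∀ S T : Finset α, S ⊆ T → T ⊆ B → f S ≤ f T)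
    (hs : ∀ S T : Finset α, S ⊆ B → T ⊆ B → f (S ∪ T) + f (S ∩ T) ≤ f S + f T)
    (C : Finset α) :
    PerturbationOn B 2 f (fun S => f S + f (S ∩ C)) := by
  have hsubB : ∀ S : Finset α, S ⊆ B → S ∩ C ⊆ B :=
    fun S hS => Finset.inter_subset_left.trans hS
  refine ⟨?_, ?_, ?_, ?_, ?_⟩
  · intro S hS
    have h1 := hf0 S hS
    have h2 := hf0 (S ∩ C) (hsubB S hS)
    dsimp only; linarith
  · intro S T hST hT
    have h1 := hm S T hST hT
    have h2 := hm (S ∩ C) (T ∩ C) (Finset.inter_subset_inter hST (Finset.Subset.refl C))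
      (hsubB T hT)
    dsimp only; linarith
  · intro S T hS hT
    have h1 := hs S T hS hT
    have h2 := hs (S ∩ C) (T ∩ C) (hsubB S hS) (hsubB T hT)
    have e1 : (S ∪ T) ∩ C = (S ∩ C) ∪ (T ∩ C) := Finset.union_inter_distrib_right S T C
    have e2 : (S ∩ T) ∩ C = (S ∩ C) ∩ (T ∩ C) := by
      ext a
      simp only [Finset.mem_inter]
      tauto
    dsimp only
    rw [e1, e2]
    linarith
  · intro S hS
    have h1 := hf0 (S ∩ C) (hsubB S hS)
    have h2 := hm (S ∩ C) S Finset.inter_subset_left hS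
    dsimp only
    constructor <;> linarith
  · intro S hS j hjB hjS
    have hj0 : (0:ℝ) ≤ f {j} := hf0 {j} (Finset.singleton_subset_iff.mpr hjB)
    by_cases hjC : j ∈ C
    · have e1 : insert j S ∩ C = insert j (S ∩ C) := Finset.insert_inter_of_mem hjC
      have hins : insert j (S ∩ C) ⊆ B := Finset.insert_subset hjB (hsubB S hS)
      have hmono := hm (S ∩ C) (insert j (S ∩ C)) (Finset.subset_insert _ _) hins
      have hsub2 := hs (S ∩ C) {j} (hsubB S hS) (Finset.singleton_subset_iff.mpr hjB)
      have e3 : (S ∩ C) ∪ {j} = insert j (S ∩ C) := by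
        rw [Finset.union_comm]
        exact (Finset.insert_eq j (S ∩ C)).symm
      have e4 : (S ∩ C) ∩ {j} = ∅ := by
        apply Finset.eq_empty_iff_forall_notMem.mpr
        intro a ha
        have h1 := Finset.mem_inter.mp ha
        have h2 := Finset.mem_singleton.mp h1.2
        exact hjS (h2 ▸ (Finset.mem_inter.mp h1.1).1)
      have h0 : (0:ℝ) ≤ f ∅ := hf0 ∅ (Finset.empty_subset B)
      rw [e3, e4] at hsub2
      dsimp only
      rw [e1]
      constructor <;> [linarith; (ring_nf; linarith)]
    · have e1 : insert j S ∩ C = S ∩ C := Finset.insert_inter_of_notMem hjC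
      dsimp only
      rw [e1]
      constructor <;> [linarith; (ring_nf; linarith)]

theorem greedy_recovers_welfare_maximization
    {α : Type*} [Fintype α] [DecidableEq α]
    (I : Finset α → Prop) (hmat : IsMatroidFam I)
    (k : ℕ) (B : Fin k → Finset α)
    (hdisj : ∀ i j : Fin k, i ≠ j → Disjoint (B i) (B j))
    (hcover : (Finset.univ : Finset α) = Finset.univ.biUnion B)
    (f : Fin k → Finset α → ℝ)
    (hf0 : ∀ i, ∀ S : Finset α, S ⊆ B i → 0 ≤ f i S)
    (hfmono : ∀ i, ∀ S T : Finset α, S ⊆ T → T ⊆ B i → f i S ≤ f i T)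
    (hfsub : ∀ i, ∀ S T : Finset α, S ⊆ B i → T ⊆ B i →
      f i (S ∪ T) + f i (S ∩ T) ≤ f i S + f i T)
    (F : Finset α → ℝ) (hF : ∀ S : Finset α, F S = ∑ i : Fin k, f i (S ∩ B i))
    (Sstar : Finset α) (hSstar : I Sstar)
    (hstable : ∀ f' : Fin k → Finset α → ℝ,
      (∀ i, PerturbationOn (B i) 2 (f i) (f' i)) →
      ∀ T : Finset α, I T → T ≠ Sstar →
        (∑ i : Fin k, f' i (T ∩ B i)) < ∑ i : Fin k, f' i (Sstar ∩ B i))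
    (l : List α) (hl : GreedyRunSub I F l) :
    l.toFinset = Sstar := by
  obtain ⟨hIempty, hdown, hexch⟩ := hmat
  -- basic facts about F
  have hFmono : ∀ S T : Finset α, S ⊆ T → F S ≤ F T := by
    intro S T hST
    rw [hF, hF]
    apply Finset.sum_le_sum
    intro i _
    exact hfmono i _ _ (Finset.inter_subset_inter hST (Finset.Subset.refl _))
      Finset.inter_subset_right
  have hFsub : ∀ S T : Finset α, F (S ∪ T) + F (S ∩ T) ≤ F S + F T := by
    intro S T
    rw [hF (S ∪ T), hF (S ∩ T), hF S, hF T, ← Finset.sum_add_distrib,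
      ← Finset.sum_add_distrib]
    apply Finset.sum_le_sum
    intro i _
    have e1 : (S ∪ T) ∩ B i = (S ∩ B i) ∪ (T ∩ B i) := Finset.union_inter_distrib_right S T _
    have e2 : (S ∩ T) ∩ B i = (S ∩ B i) ∩ (T ∩ B i) := by
      ext a; simp only [Finset.mem_inter]; tauto
    rw [e1, e2]
    exact hfsub i _ _ Finset.inter_subset_right Finset.inter_subset_right
  have hFmarg : ∀ A Cs : Finset α, ∀ x : α, A ⊆ Cs → x ∉ Cs →
      F (insert x Cs) - F Cs ≤ F (insert x A) - F A := by
    intro A Cs x hAC hxC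
    have h := hFsub (insert x A) Cs
    have e1 : insert x A ∪ Cs = insert x Cs := by
      ext a
      have h1 : a ∈ A → a ∈ Cs := fun h => hAC h
      simp only [Finset.mem_union, Finset.mem_insert]
      tauto
    have e2 : insert x A ∩ Cs = A := by
      ext a
      have h1 : a ∈ A → a ∈ Cs := fun h => hAC h
      have h2 : a = x → a ∉ Cs := fun h => h ▸ hxC
      simp only [Finset.mem_inter, Finset.mem_insert]
      tauto
    rw [e1, e2] at h
    linarith
  -- the sum identity for the perturbed functions
  have hsum : ∀ C U : Finset α,
      (∑ i : Fin k, (f i (U ∩ B i) + f i ((U ∩ B i) ∩ C))) = F U + F (U ∩ C) := by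
    intro C U
    rw [Finset.sum_add_distrib, hF U, hF (U ∩ C)]
    congr 1
    apply Finset.sum_congr rfl
    intro i _
    congr 1
    ext a; simp only [Finset.mem_inter]; tauto
  -- derived stability statement
  have hstab' : ∀ C T' : Finset α, I T' → T' ≠ Sstar →
      F T' + F (T' ∩ C) < F Sstar + F (Sstar ∩ C) := by
    intro C T' hT' hne
    have h := hstable (fun i S => f i S + f i (S ∩ C))
      (fun i => pert_on (B i) (f i) (hf0 i) (hfmono i) (hfsub i) C) T' hT' hne
    rwa [hsum C T', hsum C Sstar] at h
  -- Sstar is a maximal independent set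
  have hSmax : ∀ x : α, x ∉ Sstar → ¬ I (insert x Sstar) := by
    intro x hx hI
    have hne : insert x Sstar ≠ Sstar := fun h => hx (h ▸ Finset.mem_insert_self x Sstar)
    have h := hstab' ∅ (insert x Sstar) hI hne
    have hmono := hFmono Sstar (insert x Sstar) (Finset.subset_insert _ _)
    simp only [Finset.inter_empty] at h
    linarith
  -- prefix facts
  have hpref_eq : ∀ (i : ℕ) (hi : i < l.length),
      (l.take (i+1)).toFinset = insert (l.get ⟨i, hi⟩) (l.take i).toFinset := by
    intro i hi
    have h := List.take_concat_get hi
    rw [List.concat_eq_append] at h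
    rw [← h, List.toFinset_append]
    ext a
    simp only [Finset.mem_union, List.toFinset_cons, List.toFinset_nil,
      Finset.mem_insert, Finset.mem_singleton, List.mem_toFinset, Finset.notMem_empty,
      List.get_eq_getElem]
    tauto
  have hprefI : ∀ i : ℕ, i ≤ l.length → I ((l.take i).toFinset) := by
    intro i hi
    cases i with
    | zero => simpa using hIempty
    | succ n =>
      have hn : n < l.length := Nat.lt_of_succ_le hi
      have h := (hl.1 ⟨n, hn⟩).2.1
      rw [hpref_eq n hn]
      exact h
  -- main induction: every greedy prefix is contained in Sstar
  have hmain : ∀ i : ℕ, i ≤ l.length → (l.take i).toFinset ⊆ Sstar := by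
    intro i
    induction i with
    | zero => intro _; simp
    | succ n ih =>
      intro hn1
      have hn : n < l.length := Nat.lt_of_succ_le hn1
      have ihn := ih (Nat.le_of_lt hn)
      obtain ⟨henot, hPins, hmax⟩ := hl.1 ⟨n, hn⟩
      set e : α := l.get ⟨n, hn⟩ with he
      set P : Finset α := (l.take n).toFinset with hP
      rw [hpref_eq n hn]
      have heS : e ∈ Sstar := by
        by_contra heS
        have hPne : P ≠ Sstar := fun h => hSmax e heS (h ▸ hPins)
        have hPsub : P ⊂ Sstar := HasSubset.Subset.ssubset_of_ne ihn hPne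
        have hcardP : P.card < Sstar.card := Finset.card_lt_card hPsub
        have hcardins : (insert e P).card ≤ Sstar.card := by
          have := Finset.card_insert_le e P
          omega
        obtain ⟨T', hT'I, hPT', hT'sub, hT'card⟩ :=
          matroid_aug ⟨hIempty, hdown, hexch⟩ (Sstar.card - (insert e P).card)
            (insert e P) Sstar hPins hSstar hcardins rfl
        have heT' : e ∈ T' := hPT' (Finset.mem_insert_self e P)
        have hT'ne : T' ≠ Sstar := fun h => heS (h ▸ heT')
        set A : Finset α := Sstar ∩ T' with hA
        have hT'insSstar : T' ⊆ insert e Sstar := by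
          refine hT'sub.trans ?_
          intro a ha
          rcases Finset.mem_union.mp ha with h | h
          · rcases Finset.mem_insert.mp h with h | h
            · exact h ▸ Finset.mem_insert_self e Sstar
            · exact Finset.mem_insert_of_mem (ihn h)
          · exact Finset.mem_insert_of_mem h
        have hT'eq : T' = insert e A := by
          apply Finset.Subset.antisymm
          · intro a haT'
            rcases Finset.mem_insert.mp (hT'insSstar haT') with h | h
            · exact h ▸ Finset.mem_insert_self e A
            · exact Finset.mem_insert_of_mem (Finset.mem_inter.mpr ⟨h, haT'⟩)
          · exact Finset.insert_subset heT' Finset.inter_subset_right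
        have heA : e ∉ A := fun h => heS (Finset.mem_inter.mp h).1
        have hcardA : A.card + 1 = Sstar.card := by
          have h1 : T'.card = A.card + 1 := by
            rw [hT'eq, Finset.card_insert_of_notMem heA]
          omega
        have hAsub : A ⊆ Sstar := Finset.inter_subset_left
        have hAss : A ⊂ Sstar := by
          refine HasSubset.Subset.ssubset_of_ne hAsub (fun h => ?_)
          rw [h] at hcardA
          omega
        obtain ⟨d, hdS, hdA⟩ := Finset.exists_of_ssubset hAss
        have hSeq : Sstar = insert d A := by
          refine (Finset.eq_of_subset_of_card_le
            (Finset.insert_subset hdS hAsub) ?_).symm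
          rw [Finset.card_insert_of_notMem hdA]
          omega
        have hPA : P ⊆ A :=
          Finset.subset_inter ihn ((Finset.subset_insert e P).trans hPT')
        have hdP : d ∉ P := fun h => hdA (hPA h)
        have h1 : F (insert d A) - F A ≤ F (insert d P) - F P := hFmarg P A d hPA hdA
        have hdPI : I (insert d P) := hdown _ _ hSstar (Finset.insert_subset hdS ihn)
        have h2 : F (insert d P) - F P ≤ F (insert e P) - F P := hmax d hdP hdPI
        have h3 : F (insert e P) - F P ≤ F {e} - F ∅ := by
          have h := hFmarg ∅ P e (Finset.empty_subset P) henot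
          have he2 : insert e (∅ : Finset α) = {e} := rfl
          rw [he2] at h
          exact h
        have h4 : F A ≤ F T' := hFmono A T' (hT'eq ▸ Finset.subset_insert e A)
        have h5 := hstab' {e} T' hT'I hT'ne
        have hT'e : T' ∩ {e} = {e} := Finset.inter_singleton_of_mem heT'
        have hSe : Sstar ∩ {e} = ∅ := Finset.inter_singleton_of_notMem heS
        rw [hT'e, hSe] at h5
        have h6 : F Sstar = F (insert d A) := by rw [hSeq]
        linarith
      exact Finset.insert_subset heS ihn
  -- endgame
  have hTsub : l.toFinset ⊆ Sstar := by
    have h := hmain l.length (le_refl _)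
    rwa [List.take_length] at h
  have hTI : I l.toFinset := by
    have h := hprefI l.length (le_refl _)
    rwa [List.take_length] at h
  by_contra hne
  have hss : l.toFinset ⊂ Sstar := HasSubset.Subset.ssubset_of_ne hTsub hne
  obtain ⟨x, hxS, hxT, hxI⟩ := hexch _ _ hTI hSstar (Finset.card_lt_card hss)
  exact hl.2 x hxT hxI
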